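/- Let Z be an invertible n×n matrix over a field K, let λ : n → K with λ_i ≠ 1 for every i, let D = diag(λ), G_i the elementary matrix with a 1 in the (i,i) entry, U_i = Z G_i Z⁻¹, A = Z D Z⁻¹, and let b be a vector. Suppose the sequence of vectors (m_i) satisfies m_i = A m_{i-1} + b for l+1 ≤ i ≤ l+N. Then m_{l+N} = (∑_i λ_i^N U_i) m_l + (∑_i ((1 − λ_i^N)/(1 − λ_i)) U_i) b. -/

import Mathlib

open Matrix

lemma diag_eq_sum_std {n : Type*} [Fintype n] [DecidableEq n] {K : Type*} [Field K]
    (c : n → K) : Matrix.diagonal c = ∑ i, c i • Matrix.single i i (1 : K) := by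
  ext a b
  simp [Matrix.sum_apply, Matrix.single, Matrix.diagonal_apply, ite_and]

lemma sum_smul_conj {n : Type*} [Fintype n] [DecidableEq n] {K : Type*} [Field K]
    (Z : Matrix n n K) (c : n → K) :
    (∑ i, c i • (Z * Matrix.single i i (1 : K) * Z⁻¹))
      = Z * Matrix.diagonal c * Z⁻¹ := by
  rw [diag_eq_sum_std, Finset.mul_sum, Finset.sum_mul]
  simp only [Matrix.mul_smul, Matrix.smul_mul]

lemma conj_mul_conj {n : Type*} [Fintype n] [DecidableEq n] {K : Type*} [Field K]
    (Z : Matrix n n K) [Invertible Z] (d c : n → K) :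
    (Z * Matrix.diagonal d * Z⁻¹) * (Z * Matrix.diagonal c * Z⁻¹)
      = Z * Matrix.diagonal (fun i => d i * c i) * Z⁻¹ := by
  have h : Matrix.diagonal d * (Matrix.diagonal c * Z⁻¹)
      = Matrix.diagonal (fun i => d i * c i) * Z⁻¹ := by
    rw [← Matrix.mul_assoc, Matrix.diagonal_mul_diagonal]
  simp [Matrix.mul_assoc, Matrix.inv_mul_cancel_left_of_invertible, h]

lemma conj_add {n : Type*} [Fintype n] [DecidableEq n] {K : Type*} [Field K]
    (Z : Matrix n n K) (d c : n → K) :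
    (Z * Matrix.diagonal d * Z⁻¹) + (Z * Matrix.diagonal c * Z⁻¹)
      = Z * Matrix.diagonal (fun i => d i + c i) * Z⁻¹ := by
  rw [← Matrix.add_mul, ← Matrix.mul_add, ← Matrix.diagonal_add]

/-- The multiscale Bloch formula: if `m i = A (m (i-1)) + b` on `l+1 ≤ i ≤ l+N` with
`A = Z D Z⁻¹`, `D = diag(λ)` and `λ i ≠ 1`, then
`m (l+N) = (∑ i, λ i ^ N • U i) (m l) + (∑ i, ((1 - λ i ^ N)/(1 - λ i)) • U i) b`. -/
theorem multiscale_bloch_formula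
    {n : Type*} [Fintype n] [DecidableEq n] {K : Type*} [Field K]
    (Z : Matrix n n K) [Invertible Z] (lam : n → K) (hlam : ∀ i, lam i ≠ 1)
    (b : n → K) (m : ℕ → n → K) (l N : ℕ) :
    let D : Matrix n n K := Matrix.diagonal lam
    let G : n → Matrix n n K := fun i => Matrix.single i i 1
    let U : n → Matrix n n K := fun i => Z * G i * Z⁻¹
    let A : Matrix n n K := Z * D * Z⁻¹
    (∀ i, l + 1 ≤ i → i ≤ l + N → m i = A.mulVec (m (i - 1)) + b) →
      m (l + N) = (∑ i, lam i ^ N • U i).mulVec (m l)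
        + (∑ i, ((1 - lam i ^ N) / (1 - lam i)) • U i).mulVec b := by
  intro D G U A
  induction N with
  | zero =>
    intro h
    rw [show (∑ i, lam i ^ 0 • U i) = Z * Matrix.diagonal (fun i => lam i ^ 0) * Z⁻¹
        from sum_smul_conj Z _,
      show (∑ i, ((1 - lam i ^ 0) / (1 - lam i)) • U i)
        = Z * Matrix.diagonal (fun i => (1 - lam i ^ 0) / (1 - lam i)) * Z⁻¹
        from sum_smul_conj Z _]
    simp [Matrix.diagonal_one, Matrix.mul_nonsing_inv_cancel_right]
  | succ N ih =>
    intro h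
    have hm : m (l + (N + 1)) = A.mulVec (m (l + N)) + b := by
      have := h (l + N + 1) (by omega) (by omega)
      show m (l + N + 1) = _
      simpa [Nat.add_sub_cancel] using this
    have ih' := ih (fun i h1 h2 => h i h1 (by omega))
    rw [show (∑ i, lam i ^ N • U i) = Z * Matrix.diagonal (fun i => lam i ^ N) * Z⁻¹
        from sum_smul_conj Z _,
      show (∑ i, ((1 - lam i ^ N) / (1 - lam i)) • U i)
        = Z * Matrix.diagonal (fun i => (1 - lam i ^ N) / (1 - lam i)) * Z⁻¹
        from sum_smul_conj Z _] at ih'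
    rw [show (∑ i, lam i ^ (N + 1) • U i)
        = Z * Matrix.diagonal (fun i => lam i ^ (N + 1)) * Z⁻¹ from sum_smul_conj Z _,
      show (∑ i, ((1 - lam i ^ (N + 1)) / (1 - lam i)) • U i)
        = Z * Matrix.diagonal (fun i => (1 - lam i ^ (N + 1)) / (1 - lam i)) * Z⁻¹
        from sum_smul_conj Z _]
    rw [hm, ih', Matrix.mulVec_add, Matrix.mulVec_mulVec, Matrix.mulVec_mulVec]
    have hA : A = Z * Matrix.diagonal lam * Z⁻¹ := rfl
    rw [hA, conj_mul_conj, conj_mul_conj]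
    have e1 : (fun i => lam i * lam i ^ N) = (fun i => lam i ^ (N + 1)) := by
      funext i; ring
    rw [e1, add_assoc]
    congr 1
    have hone : (1 : Matrix n n K) = Z * Matrix.diagonal (fun _ => (1 : K)) * Z⁻¹ := by
      simp [Matrix.diagonal_one, Matrix.mul_nonsing_inv_cancel_right]
    have key : (Z * Matrix.diagonal (fun i => lam i * ((1 - lam i ^ N) / (1 - lam i))) * Z⁻¹)
        + 1 = Z * Matrix.diagonal (fun i => (1 - lam i ^ (N + 1)) / (1 - lam i)) * Z⁻¹ := by
      have hd : (fun i => lam i * ((1 - lam i ^ N) / (1 - lam i)) + 1)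
          = (fun i => (1 - lam i ^ (N + 1)) / (1 - lam i)) := by
        funext i
        have h1 : 1 - lam i ≠ 0 := sub_ne_zero.mpr fun e => hlam i e.symm
        field_simp
        ring
      rw [hone, conj_add, hd]
    rw [show (Z * Matrix.diagonal (fun i => lam i * ((1 - lam i ^ N) / (1 - lam i))) * Z⁻¹) *ᵥ b
          + b
        = ((Z * Matrix.diagonal (fun i => lam i * ((1 - lam i ^ N) / (1 - lam i))) * Z⁻¹) + 1) *ᵥ b
        by rw [Matrix.add_mulVec, Matrix.one_mulVec], key]
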